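/- Let a ∈ ℝ³ be nonzero, and consider N = 1 JNR data with poles a₀ = a, a₁ = −a and equal weights λ₀ = λ₁ = 1. Then for x ∈ ℝ³ ∖ {a, −a}, ζ(x) = (x − a)/‖x − a‖² + (x + a)/‖x + a‖² = 0 if and only if x = 0. -/

import Mathlib

/-- For `N = 1` JNR data with poles `a₀ = a`, `a₁ = −a` (`a ≠ 0`) and
equal unit weights, `ζ(x) = (x − a)/‖x − a‖² + (x + a)/‖x + a‖² = 0` iff `x = 0`. -/
theorem jnr_one_skyrmion_location (a : EuclideanSpace ℝ (Fin 3)) (ha : a ≠ 0)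
    (x : EuclideanSpace ℝ (Fin 3)) (hx₀ : x ≠ a) (hx₁ : x ≠ -a) :
    ((1 / ‖x - a‖ ^ 2) • (x - a) + (1 / ‖x + a‖ ^ 2) • (x + a) = 0) ↔ x = 0 := by
  have hu : x - a ≠ 0 := sub_ne_zero.mpr hx₀
  have hv : x + a ≠ 0 := by
    intro h
    exact hx₁ (by rw [eq_neg_iff_add_eq_zero]; exact h)
  have hun : ‖x - a‖ ≠ 0 := norm_ne_zero_iff.mpr hu
  have hvn : ‖x + a‖ ≠ 0 := norm_ne_zero_iff.mpr hv
  constructor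
  · intro h
    have h' : (1 / ‖x - a‖ ^ 2) • (x - a) = -((1 / ‖x + a‖ ^ 2) • (x + a)) := by
      linear_combination (norm := module) h
    have hnorm : (1 / ‖x - a‖ ^ 2) * ‖x - a‖ = (1 / ‖x + a‖ ^ 2) * ‖x + a‖ := by
      have := congrArg norm h'
      rwa [norm_neg, norm_smul, norm_smul, Real.norm_eq_abs, Real.norm_eq_abs,
        abs_of_nonneg (by positivity), abs_of_nonneg (by positivity)] at this
    have heq : ‖x + a‖ = ‖x - a‖ := by
      field_simp at hnorm
      exact hnorm
    rw [heq.symm] at h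
    have hsum : (1 / ‖x + a‖ ^ 2) • ((x - a) + (x + a)) = 0 := by
      rw [smul_add]; exact h
    have h0 : (x - a) + (x + a) = 0 := by
      rcases smul_eq_zero.mp hsum with h1 | h1
      · exact absurd h1 (by positivity)
      · exact h1
    have h2 : (2 : ℝ) • x = 0 := by linear_combination (norm := module) h0
    rcases smul_eq_zero.mp h2 with h1 | h1
    · norm_num at h1
    · exact h1
  · intro h
    subst h
    have : ‖(0 : EuclideanSpace ℝ (Fin 3)) - a‖ = ‖(0 : EuclideanSpace ℝ (Fin 3)) + a‖ := by
      rw [zero_sub, zero_add, norm_neg]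
    rw [this]
    linear_combination (norm := module) (0 : EuclideanSpace ℝ (Fin 3)) = 0
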